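/- Let g be a finite-dimensional real inner product space and (V_x)_{x∈X} a family of k-dimensional subspaces of g indexed by a set X. Suppose η₀ ∈ g is not in the closure of ⋃_{x∈X} V_x^⊥. Then there exists an open neighborhood Ω of η₀ such that C_Ω := inf_{x∈X} sup_{Y ∈ V_x, |Y|=1} inf_{ξ∈Ω} |⟨ξ, Y⟩| > 0. -/

import Mathlib

open scoped RealInnerProductSpace

/-- Let `g` be a finite-dimensional real inner product space and
`(V x)_{x ∈ X}` a family of `k`-dimensional subspaces.  If `η₀` is not in the closure of
`⋃ x, (V x)ᗮ`, then there is an open neighborhood `Ω` of `η₀` such that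
`C_Ω = inf_x sup_{Y ∈ V x, ‖Y‖ = 1} inf_{ξ ∈ Ω} |⟨ξ, Y⟩| > 0`; i.e. there is `c > 0`
such that for every `x` there is a unit vector `Y ∈ V x` with `|⟨ξ, Y⟩| ≥ c` for all
`ξ ∈ Ω`. -/
theorem stmt_7 {g : Type*} [NormedAddCommGroup g] [InnerProductSpace ℝ g]
    [FiniteDimensional ℝ g] {X : Type*} (k : ℕ) (hk : 0 < k)
    (V : X → Submodule ℝ g)
    (hdim : ∀ x, Module.finrank ℝ (V x) = k)
    (η₀ : g) (hη : η₀ ∉ closure (⋃ x, ((V x)ᗮ : Set g))) :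
    ∃ Ω : Set g, IsOpen Ω ∧ η₀ ∈ Ω ∧
      ∃ c > 0, ∀ x, ∃ Y ∈ V x, ‖Y‖ = 1 ∧ ∀ ξ ∈ Ω, c ≤ |⟪ξ, Y⟫| := by
  rw [Metric.mem_closure_iff] at hη
  push_neg at hη
  obtain ⟨ε, hε, hfar⟩ := hη
  refine ⟨Metric.ball η₀ (ε / 2), Metric.isOpen_ball,
    Metric.mem_ball_self (by linarith), ε / 2, by linarith, fun x => ?_⟩
  set P : g := ((V x).orthogonalProjectionOnto η₀ : g) with hPdef
  have hPmem : P ∈ V x := ((V x).orthogonalProjectionOnto η₀).2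
  have hmemo : η₀ - P ∈ (V x)ᗮ := Submodule.sub_starProjection_mem_orthogonal (K := V x) η₀
  have hPbig : ε ≤ ‖P‖ := by
    have := hfar (η₀ - P) (Set.mem_iUnion.mpr ⟨x, hmemo⟩)
    simpa [dist_eq_norm] using this
  have hPpos : 0 < ‖P‖ := lt_of_lt_of_le hε hPbig
  have hPne : P ≠ 0 := by
    intro h; rw [h, norm_zero] at hPpos; exact lt_irrefl 0 hPpos
  refine ⟨‖P‖⁻¹ • P, Submodule.smul_mem _ _ hPmem, ?_, ?_⟩
  · rw [norm_smul, norm_inv, norm_norm, inv_mul_cancel₀ (ne_of_gt hPpos)]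
  · intro ξ hξ
    have hinner0 : ⟪η₀ - P, ‖P‖⁻¹ • P⟫ = 0 := by
      have := (Submodule.mem_orthogonal _ _).mp hmemo (‖P‖⁻¹ • P)
        (Submodule.smul_mem _ _ hPmem)
      simpa [real_inner_comm] using this
    have hη₀Y : ⟪η₀, ‖P‖⁻¹ • P⟫ = ‖P‖ := by
      have : ⟪η₀, ‖P‖⁻¹ • P⟫ = ⟪η₀ - P, ‖P‖⁻¹ • P⟫ + ⟪P, ‖P‖⁻¹ • P⟫ := by
        rw [← inner_add_left, sub_add_cancel]
      rw [this, hinner0, zero_add, real_inner_smul_right, real_inner_self_eq_norm_mul_norm]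
      field_simp
    have hdiff : |⟪ξ - η₀, ‖P‖⁻¹ • P⟫| ≤ ‖ξ - η₀‖ := by
      have h1 : ‖(‖P‖⁻¹ • P)‖ = 1 := by
        rw [norm_smul, norm_inv, norm_norm, inv_mul_cancel₀ (ne_of_gt hPpos)]
      calc |⟪ξ - η₀, ‖P‖⁻¹ • P⟫| ≤ ‖ξ - η₀‖ * ‖(‖P‖⁻¹ • P)‖ :=
            abs_real_inner_le_norm _ _
        _ = ‖ξ - η₀‖ := by rw [h1, mul_one]
    have hdist : ‖ξ - η₀‖ < ε / 2 := by
      have := Metric.mem_ball.mp hξ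
      rwa [dist_eq_norm] at this
    have hsplit : ⟪ξ, ‖P‖⁻¹ • P⟫ = ⟪ξ - η₀, ‖P‖⁻¹ • P⟫ + ‖P‖ := by
      have : ⟪ξ, ‖P‖⁻¹ • P⟫ = ⟪ξ - η₀, ‖P‖⁻¹ • P⟫ + ⟪η₀, ‖P‖⁻¹ • P⟫ := by
        rw [← inner_add_left, sub_add_cancel]
      rw [this, hη₀Y]
    rw [hsplit]
    have : ε / 2 ≤ ⟪ξ - η₀, ‖P‖⁻¹ • P⟫ + ‖P‖ := by
      have hlow := (abs_le.mp ((lt_of_le_of_lt hdiff hdist).le)).1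
      linarith
    calc ε / 2 ≤ ⟪ξ - η₀, ‖P‖⁻¹ • P⟫ + ‖P‖ := this
      _ ≤ |⟪ξ - η₀, ‖P‖⁻¹ • P⟫ + ‖P‖| := le_abs_self _
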